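/- (Formal recursion lemma underlying Theorem 3.1 and Proposition 3.4; analogue of Lusztig's Lemma 7.1.2.) For every integer m ≥ 0: −q_i^{−e(2m−a)} B y_m + y_m B = [m+1] y_{m+1} in A. (Applying this with X = B_{τi}, a = −c_{i,τi} gives the first sum in the recursion of Theorem 3.1, and with X = B_j, a = −c_{ij} it gives the recursion used in the proof of Proposition 3.4.) -/

import Mathlib

noncomputable section

/-- The quantum integer `[n]_v = (v^n - v^{-n})/(v - v^{-1})`. -/
def qint {K : Type*} [Field K] (v : RatFunc K) (n : ℤ) : RatFunc K :=
  (v ^ n - v ^ (-n)) / (v - v⁻¹)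

/-- The quantum factorial `[m]_v! = [1]_v [2]_v ⋯ [m]_v`. -/
def qfact {K : Type*} [Field K] (v : RatFunc K) (m : ℕ) : RatFunc K :=
  ∏ k ∈ Finset.range m, qint v ((k : ℤ) + 1)

/-- The divided power `x^{(m)} = x^m/[m]_v!` for `m ≥ 0`, and `0` for `m < 0`. -/
def dp {K : Type*} [Field K] {A : Type*} [Ring A] [Algebra (RatFunc K) A]
    (v : RatFunc K) (x : A) (m : ℤ) : A :=
  if m < 0 then 0 else (qfact v m.toNat)⁻¹ • x ^ m.toNat

section Aux

variable {K : Type*} [Field K] (v : RatFunc K)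

lemma aux_zpow_ne_one (ε : ℕ) (hε : 0 < ε) (hv : v = RatFunc.X ^ ε)
    (k : ℤ) (hk : k ≠ 0) : v ^ k ≠ 1 := by
  have hpos : ∀ n : ℕ, 0 < n → v ^ n ≠ 1 := by
    intro n hn h1
    rw [hv, ← pow_mul, ← RatFunc.algebraMap_X (K := K), ← map_pow,
      ← map_one (algebraMap (Polynomial K) (RatFunc K))] at h1
    have := RatFunc.algebraMap_injective K h1
    have hd := congrArg Polynomial.natDegree this
    simp [Polynomial.natDegree_X_pow] at hd
    omega
  rcases lt_trichotomy k 0 with h | h | h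
  · intro h1
    have h2 : v ^ (-k) = 1 := by rw [← inv_eq_one, ← zpow_neg, neg_neg, h1]
    have hk' : v ^ ((-k).toNat) = 1 := by
      rwa [← zpow_natCast, Int.toNat_of_nonneg (by omega)]
    exact hpos _ (by omega) hk'
  · omega
  · intro h1
    have hk' : v ^ (k.toNat) = 1 := by
      rwa [← zpow_natCast, Int.toNat_of_nonneg (by omega)]
    exact hpos _ (by omega) hk'

lemma aux_qint_ne (hv0 : v ≠ 0) (hone : ∀ k : ℤ, k ≠ 0 → v ^ k ≠ 1)
    (n : ℤ) (hn : 0 < n) : qint v n ≠ 0 := by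
  have key : ∀ k : ℤ, k ≠ 0 → v ^ k - v ^ (-k) ≠ 0 := by
    intro k hk h
    apply hone (2 * k) (by omega)
    have h2 := sub_eq_zero.mp h
    have h3 : v ^ (2 * k) = v ^ k * v ^ (-k) := by
      rw [← h2, ← zpow_add₀ hv0, two_mul]
    rw [h3, ← zpow_add₀ hv0]
    norm_num
  have hden : v - v⁻¹ ≠ 0 := by
    have := key 1 one_ne_zero
    simpa using this
  exact div_ne_zero (key n (by omega)) hden

lemma aux_qint_add (hv0 : v ≠ 0) (e p q : ℤ) (he : e = 1 ∨ e = -1) :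
    v ^ (-e * q) * qint v p + v ^ (e * p) * qint v q = qint v (p + q) := by
  unfold qint
  rw [← mul_div_assoc, ← mul_div_assoc, ← add_div]
  congr 1
  have hV : v ^ p ≠ 0 := zpow_ne_zero _ hv0
  have hW : v ^ q ≠ 0 := zpow_ne_zero _ hv0
  have e1 : v ^ (p + q) = v ^ p * v ^ q := zpow_add₀ hv0 p q
  have e2 : v ^ (-(p + q)) = (v ^ p)⁻¹ * (v ^ q)⁻¹ := by
    rw [neg_add, zpow_add₀ hv0, zpow_neg, zpow_neg]
  rcases he with rfl | rfl <;>
    simp only [neg_mul, one_mul, neg_neg, zpow_neg, e1, e2] <;>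
    field_simp <;> ring

lemma aux_qfact_ne (hq : ∀ n : ℤ, 0 < n → qint v n ≠ 0) (n : ℕ) :
    qfact v n ≠ 0 := by
  unfold qfact
  exact Finset.prod_ne_zero_iff.mpr fun k _ => hq _ (by positivity)

lemma aux_dp_nat {A : Type*} [Ring A] [Algebra (RatFunc K) A] (x : A) (r : ℕ) :
    dp v x (r : ℤ) = (qfact v r)⁻¹ • x ^ r := by
  simp [dp]

lemma aux_qint_zero : qint v 0 = 0 := by simp [qint]

lemma aux_B_dp {A : Type*} [Ring A] [Algebra (RatFunc K) A]
    (hq : ∀ n : ℤ, 0 < n → qint v n ≠ 0) (B : A) (r : ℕ) :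
    B * dp v B (r : ℤ) = qint v ((r : ℤ) + 1) • dp v B ((r : ℤ) + 1) := by
  have hc : ((r : ℤ) + 1) = ((r + 1 : ℕ) : ℤ) := by push_cast; ring
  rw [hc, aux_dp_nat, aux_dp_nat, mul_smul_comm, ← pow_succ', smul_smul]
  congr 1
  have hfs : qfact v (r + 1) = qfact v r * qint v ((r : ℤ) + 1) := by
    unfold qfact; rw [Finset.prod_range_succ]
  rw [hfs, ← hc]
  have h1 := aux_qfact_ne v hq r
  have h2 := hq ((r : ℤ) + 1) (by positivity)
  field_simp

lemma aux_dp_B {A : Type*} [Ring A] [Algebra (RatFunc K) A]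
    (hq : ∀ n : ℤ, 0 < n → qint v n ≠ 0) (B : A) (r : ℕ) :
    dp v B (r : ℤ) * B = qint v ((r : ℤ) + 1) • dp v B ((r : ℤ) + 1) := by
  have hc : ((r : ℤ) + 1) = ((r + 1 : ℕ) : ℤ) := by push_cast; ring
  rw [hc, aux_dp_nat, aux_dp_nat, smul_mul_assoc, ← pow_succ, smul_smul]
  congr 1
  have hfs : qfact v (r + 1) = qfact v r * qint v ((r : ℤ) + 1) := by
    unfold qfact; rw [Finset.prod_range_succ]
  rw [hfs, ← hc]
  have h1 := aux_qfact_ne v hq r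
  have h2 := hq ((r : ℤ) + 1) (by positivity)
  field_simp

end Aux

/-- (Formal recursion lemma underlying Theorem 3.1 and Proposition 3.4; analogue of
Lusztig's Lemma 7.1.2.) With y_m = ∑_{r+s=m} (−1)^r q_i^{er(a−m+1)} B^{(r)} X B^{(s)},
for every m ≥ 0: −q_i^{−e(2m−a)} B y_m + y_m B = [m+1] y_{m+1}. -/
theorem stmt13 {K : Type*} [Field K] [CharZero K]
    {A : Type*} [Ring A] [Algebra (RatFunc K) A]
    (ε : ℕ) (hε : 0 < ε) (v : RatFunc K) (hv : v = RatFunc.X ^ ε)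
    (B X : A) (a : ℤ) (e : ℤ) (he : e = 1 ∨ e = -1)
    (y : ℕ → A)
    (hy : ∀ m : ℕ, y m = ∑ r ∈ Finset.range (m + 1),
        ((-1 : RatFunc K) ^ r * v ^ (e * (r : ℤ) * (a - (m : ℤ) + 1))) •
          (dp v B (r : ℤ) * X * dp v B ((m : ℤ) - (r : ℤ))))
    (m : ℕ) :
    -(v ^ (-e * (2 * (m : ℤ) - a)) • (B * y m)) + y m * B
      = qint v ((m : ℤ) + 1) • y (m + 1) := by
  have hv0 : v ≠ 0 := by rw [hv]; exact pow_ne_zero _ RatFunc.X_ne_zero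
  have hone : ∀ k : ℤ, k ≠ 0 → v ^ k ≠ 1 := aux_zpow_ne_one v ε hε hv
  have hq : ∀ n : ℤ, 0 < n → qint v n ≠ 0 := aux_qint_ne v hv0 hone
  set V : RatFunc K := v ^ (-e * (2 * (m : ℤ) - a)) with hV
  set c : ℕ → RatFunc K :=
    fun r => (-1 : RatFunc K) ^ r * v ^ (e * (r : ℤ) * (a - (m : ℤ) + 1)) with hc
  set g : ℤ → A := fun t => dp v B t * X * dp v B ((m : ℤ) + 1 - t) with hg
  set d1 : ℕ → RatFunc K := fun r =>
    V * ((-1 : RatFunc K) ^ r * v ^ (e * ((r : ℤ) - 1) * (a - (m : ℤ) + 1))) * qint v (r : ℤ)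
    with hd1
  set d2 : ℕ → RatFunc K := fun r => c r * qint v ((m : ℤ) + 1 - (r : ℤ)) with hd2
  set d3 : ℕ → RatFunc K := fun r =>
    qint v ((m : ℤ) + 1) * ((-1 : RatFunc K) ^ r * v ^ (e * (r : ℤ) * (a - (m : ℤ))))
    with hd3
  -- Step 1: B * y m
  have hA : B * y m
      = ∑ r ∈ Finset.range (m + 1), (c r * qint v ((r : ℤ) + 1)) • g ((r : ℤ) + 1) := by
    rw [hy m, Finset.mul_sum]
    refine Finset.sum_congr rfl fun r hr => ?_
    rw [mul_smul_comm, ← mul_assoc, ← mul_assoc, aux_B_dp v hq B r,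
      smul_mul_assoc, smul_mul_assoc, smul_smul]
    have harg : (m : ℤ) + 1 - ((r : ℤ) + 1) = (m : ℤ) - (r : ℤ) := by ring
    rw [hg]
    simp only [harg]
    rfl
  -- Step 2: y m * B
  have hB : y m * B = ∑ r ∈ Finset.range (m + 1), d2 r • g (r : ℤ) := by
    rw [hy m, Finset.sum_mul]
    refine Finset.sum_congr rfl fun r hr => ?_
    have hmr : ((m : ℤ) - (r : ℤ)) = (((m - r : ℕ)) : ℤ) := by
      have := Finset.mem_range.mp hr; omega
    rw [smul_mul_assoc, hmr, mul_assoc (dp v B (r : ℤ) * X),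
      aux_dp_B v hq B (m - r), mul_smul_comm, smul_smul]
    have harg1 : ((m - r : ℕ) : ℤ) + 1 = (m : ℤ) + 1 - (r : ℤ) := by
      have := Finset.mem_range.mp hr; omega
    rw [hd2, hg]
    simp only [harg1]
    rfl
  -- Step 3: reindex d1 sum
  have h1 : ∑ r ∈ Finset.range (m + 2), d1 r • g (r : ℤ) = -(V • (B * y m)) := by
    rw [hA, Finset.smul_sum, ← Finset.sum_neg_distrib]
    rw [Finset.sum_range_succ']
    have hz : d1 0 • g ((0 : ℕ) : ℤ) = 0 := by
      rw [hd1]; simp [aux_qint_zero]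
    rw [hz, add_zero]
    refine Finset.sum_congr rfl fun r hr => ?_
    have hcast : ((r + 1 : ℕ) : ℤ) = (r : ℤ) + 1 := by push_cast; ring
    rw [smul_smul, ← neg_smul, hcast]
    congr 1
    simp only [hd1, hc, hcast]
    have hexp : e * (((r : ℤ) + 1) - 1) * (a - (m : ℤ) + 1)
        = e * (r : ℤ) * (a - (m : ℤ) + 1) := by ring
    rw [hexp, pow_succ]
    ring
  -- Step 4: extend d2 sum
  have h2 : ∑ r ∈ Finset.range (m + 2), d2 r • g (r : ℤ) = y m * B := by
    rw [hB, Finset.sum_range_succ]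
    have hz : d2 (m + 1) = 0 := by
      simp only [hd2]
      rw [show ((m : ℤ) + 1 - ((m + 1 : ℕ) : ℤ)) = 0 by push_cast; ring,
        aux_qint_zero, mul_zero]
    rw [hz, zero_smul, add_zero]
  -- Step 5: RHS
  have h3 : qint v ((m : ℤ) + 1) • y (m + 1)
      = ∑ r ∈ Finset.range (m + 2), d3 r • g (r : ℤ) := by
    rw [hy (m + 1), Finset.smul_sum]
    refine Finset.sum_congr rfl fun r hr => ?_
    have harg : ((m + 1 : ℕ) : ℤ) - (r : ℤ) = (m : ℤ) + 1 - (r : ℤ) := by push_cast; ring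
    have hexp : e * (r : ℤ) * (a - ((m + 1 : ℕ) : ℤ) + 1) = e * (r : ℤ) * (a - (m : ℤ)) := by
      push_cast; ring
    rw [smul_smul, hd3, harg, hexp, hg]
  -- Step 6: scalar identity
  have h4 : ∀ r : ℕ, d1 r + d2 r = d3 r := by
    intro r
    have E := aux_qint_add v hv0 e (r : ℤ) ((m : ℤ) + 1 - (r : ℤ)) he
    have hpq : (r : ℤ) + ((m : ℤ) + 1 - (r : ℤ)) = (m : ℤ) + 1 := by ring
    rw [hpq] at E
    have h1' : V * v ^ (e * ((r : ℤ) - 1) * (a - (m : ℤ) + 1))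
        = v ^ (e * (r : ℤ) * (a - (m : ℤ))) * v ^ (-e * ((m : ℤ) + 1 - (r : ℤ))) := by
      rw [hV, ← zpow_add₀ hv0, ← zpow_add₀ hv0]
      congr 1
      ring
    have h2' : v ^ (e * (r : ℤ) * (a - (m : ℤ) + 1))
        = v ^ (e * (r : ℤ) * (a - (m : ℤ))) * v ^ (e * (r : ℤ)) := by
      rw [← zpow_add₀ hv0]
      congr 1
      ring
    have step : d1 r + d2 r
        = (-1 : RatFunc K) ^ r * (v ^ (e * (r : ℤ) * (a - (m : ℤ)))
            * (v ^ (-e * ((m : ℤ) + 1 - (r : ℤ))) * qint v (r : ℤ)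
              + v ^ (e * (r : ℤ)) * qint v ((m : ℤ) + 1 - (r : ℤ)))) := by
      rw [hd1, hd2, hc]
      linear_combination ((-1 : RatFunc K) ^ r * qint v (r : ℤ)) * h1'
        + ((-1 : RatFunc K) ^ r * qint v ((m : ℤ) + 1 - (r : ℤ))) * h2'
    rw [step, E, hd3]
    ring
  calc -(V • (B * y m)) + y m * B
      = ∑ r ∈ Finset.range (m + 2), d1 r • g (r : ℤ)
        + ∑ r ∈ Finset.range (m + 2), d2 r • g (r : ℤ) := by rw [h1, h2]
    _ = ∑ r ∈ Finset.range (m + 2), (d1 r + d2 r) • g (r : ℤ) := by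
        rw [← Finset.sum_add_distrib]
        exact Finset.sum_congr rfl fun r _ => (add_smul _ _ _).symm
    _ = ∑ r ∈ Finset.range (m + 2), d3 r • g (r : ℤ) := by
        exact Finset.sum_congr rfl fun r _ => by rw [h4 r]
    _ = qint v ((m : ℤ) + 1) • y (m + 1) := h3.symm
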